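/- arXiv:1611.08045 — 3 statements merged into one kernel-verified Lean document; each statement's English description precedes it below -/
import Mathlib

section
/- Let a, a', a₁, a₁', n, n' be positive integers and q, q' integers satisfying q·(a·n + a₁) + a·(a'·n' + a₁') = 1 and a'·(a·n + a₁) + q'·(a'·n' + a₁') = 1. Set k = a·a' − q·q'. Then k·(a'·n' + a₁') = a' − q and k·(a·n + a₁) = a − q', and k ≥ 1. -/
theorem stmt_9 (a a' a1 a1' n n' q q' : ℤ)
    (ha : 0 < a) (ha' : 0 < a') (ha1 : 0 < a1) (ha1' : 0 < a1')
    (hn : 0 < n) (hn' : 0 < n')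
    (h1 : q * (a * n + a1) + a * (a' * n' + a1') = 1)
    (h2 : a' * (a * n + a1) + q' * (a' * n' + a1') = 1) :
    (a * a' - q * q') * (a' * n' + a1') = a' - q ∧
    (a * a' - q * q') * (a * n + a1) = a - q' ∧
    1 ≤ a * a' - q * q' := by
  have hS : 0 < a * n + a1 := by positivity
  have hT : 0 < a' * n' + a1' := by positivity
  have e1 : (a * a' - q * q') * (a' * n' + a1') = a' - q := by linear_combination a' * h1 - q * h2
  have e2 : (a * a' - q * q') * (a * n + a1) = a - q' := by linear_combination a * h2 - q' * h1
  have hq' : q' < 0 := by nlinarith [mul_pos ha' hn']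
  have : 0 < a - q' := by omega
  have hk : 0 < a * a' - q * q' := by
    by_contra h
    push_neg at h
    nlinarith
  exact ⟨e1, e2, hk⟩
end

section
/- Let a, a', a₁, a₁', n, n' be positive integers and q, q' integers satisfying q·(a·n + a₁) + a·(a'·n' + a₁') = 1 and a'·(a·n + a₁) + q'·(a'·n' + a₁') = 1. Then a·a' − q·q' = 1 and (n = 1 or n' = 1). -/
theorem stmt_10 (a a' a1 a1' n n' q q' : ℤ)
    (ha : 0 < a) (ha' : 0 < a') (ha1 : 0 < a1) (ha1' : 0 < a1')
    (hn : 0 < n) (hn' : 0 < n')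
    (h1 : q * (a * n + a1) + a * (a' * n' + a1') = 1)
    (h2 : a' * (a * n + a1) + q' * (a' * n' + a1') = 1) :
    a * a' - q * q' = 1 ∧ (n = 1 ∨ n' = 1) := by
  obtain ⟨P, hPdef⟩ : ∃ P, P = a * n + a1 := ⟨_, rfl⟩
  obtain ⟨P', hP'def⟩ : ∃ P', P' = a' * n' + a1' := ⟨_, rfl⟩
  obtain ⟨k, hkdef⟩ : ∃ k, k = a * a' - q * q' := ⟨_, rfl⟩
  rw [← hPdef, ← hP'def] at h1 h2
  have hP : a + 1 ≤ P := by nlinarith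
  have hP' : a' + 1 ≤ P' := by nlinarith
  have hP0 : 0 < P := by linarith
  have hP'0 : 0 < P' := by linarith
  have hPP : 0 < P * P' := mul_pos hP0 hP'0
  have e1 : k * P' = a' - q := by rw [hkdef]; linear_combination a' * h1 - q * h2
  have key : k * (P * P') = a' * P + a * P' - 1 := by linear_combination P * e1 - h1
  have hk0 : 0 < k := by
    by_contra h
    push_neg at h
    have hnp : k * (P * P') ≤ 0 := mul_nonpos_of_nonpos_of_nonneg h hPP.le
    nlinarith [mul_le_mul hP' hP (by linarith) (by linarith)]
  have hk : k = 1 := by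
    by_contra h
    have hk2 : 2 ≤ k := by omega
    have h1' : 2 * (P * P') ≤ k * (P * P') := mul_le_mul_of_nonneg_right hk2 hPP.le
    have hA : a' * P ≤ (P' - 1) * P := mul_le_mul_of_nonneg_right (by linarith) hP0.le
    have hB : a * P' ≤ (P - 1) * P' := mul_le_mul_of_nonneg_right (by linarith) hP'0.le
    nlinarith
  constructor
  · omega
  by_contra hcon
  push_neg at hcon
  obtain ⟨hn1, hn1'⟩ := hcon
  have h2n : 2 ≤ n := by omega
  have h2n' : 2 ≤ n' := by omega
  have hA : a + 1 ≤ P - a := by nlinarith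
  have hB : a' + 1 ≤ P' - a' := by nlinarith
  have hprod : (a + 1) * (a' + 1) ≤ (P - a) * (P' - a') :=
    mul_le_mul hA hB (by linarith) (by linarith)
  rw [hk] at key
  nlinarith
end

section
/- Let a, a', a₁, a₁', n, n', k, q, q' be integers with a, a', a₁, a₁', n, n', k positive, such that q = a'·(1 − k·n') − k·a₁', q' = a·(1 − k·n) − k·a₁, and k = a·a' − q·q'. Then a·a'·(k·n·n' − n − n') = a·a₁'·(1 − k·n) + a'·a₁·(1 − k·n') − k·a₁·a₁' − 1, and consequently k·n·n' − n − n' ≤ −1. -/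
theorem stmt_11 (a a' a1 a1' n n' k q q' : ℤ)
    (ha : 0 < a) (ha' : 0 < a') (ha1 : 0 < a1) (ha1' : 0 < a1')
    (hn : 0 < n) (hn' : 0 < n') (hk : 0 < k)
    (hq : q = a' * (1 - k * n') - k * a1')
    (hq' : q' = a * (1 - k * n) - k * a1)
    (hkk : k = a * a' - q * q') :
    a * a' * (k * n * n' - n - n') =
      a * a1' * (1 - k * n) + a' * a1 * (1 - k * n') - k * a1 * a1' - 1 ∧
    k * n * n' - n - n' ≤ -1 := by
  have hid : a * a' * (k * n * n' - n - n') =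
      a * a1' * (1 - k * n) + a' * a1 * (1 - k * n') - k * a1 * a1' - 1 := by
    have h : k * (a * a' * (k * n * n' - n - n')) =
        k * (a * a1' * (1 - k * n) + a' * a1 * (1 - k * n') - k * a1 * a1' - 1) := by
      subst hq hq'
      ring_nf
      ring_nf at hkk
      linarith [hkk]
    exact mul_left_cancel₀ (ne_of_gt hk) h
  refine ⟨hid, ?_⟩
  have h1 : 1 ≤ k * n := by have := mul_pos hk hn; have := mul_pos hk hn'; omega
  have h2 : 1 ≤ k * n' := by have := mul_pos hk hn; have := mul_pos hk hn'; omega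
  nlinarith [mul_pos ha ha', mul_pos ha1 (mul_pos hk ha1'),
    mul_pos ha1' hk, mul_nonneg ha.le (mul_nonneg ha1'.le (sub_nonneg.2 h1)),
    mul_nonneg ha'.le (mul_nonneg ha1.le (sub_nonneg.2 h2))]
end
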